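/- There exists a strongly limit-deterministic nondeterministic Büchi automaton that accepts every ω-word over its alphabet but is not good-for-MDPs. Concretely, the 4-state NBA over alphabet {p, ¬p} with states q₀,q₁,q₂,q₃, nondeterministic non-accepting transitions q₀→{q₀,q₁,q₂} on every letter, q₁→q₃ on p, q₂→q₃ on ¬p, and an accepting self-loop on q₃, accepts every ω-word; moreover, any accepting run must, from state q₀, correctly predict whether the letter after next is p, so no strategy of resolving nondeterminism based only on the prefix read so far yields an accepting run on all words (it fails on some word produced by an adversarial/random environment). -/
import Mathlib


/-- `ρ` is a run of the automaton with transitions `δ` from `q` on word `w`. -/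
def IsRun {A Q : Type*} (δ : Q → A → Set Q) (q : Q) (w : ℕ → A) (ρ : ℕ → Q) : Prop :=
  ρ 0 = q ∧ ∀ i, ρ (i + 1) ∈ δ (ρ i) (w i)

/-- `ρ` is accepting: it takes accepting transitions (given by `γ`) infinitely often. -/
def AccRun {A Q : Type*} (γ : Q → A → Set Q) (w : ℕ → A) (ρ : ℕ → Q) : Prop :=
  ∀ N : ℕ, ∃ i ≥ N, ρ (i + 1) ∈ γ (ρ i) (w i)

/-- Transitions of the 4-state NBA over `Bool` (`true` = `p`):
`q₀ → {q₀,q₁,q₂}` on every letter, `q₁ → q₃` on `p`, `q₂ → q₃` on `¬p`,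
self-loop on `q₃`. -/
def nδ (q : Fin 4) (b : Bool) : Set (Fin 4) :=
  if q = 0 then {0, 1, 2}
  else if q = 1 then (if b then {3} else ∅)
  else if q = 2 then (if b then ∅ else {3})
  else {3}

/-- Accepting transitions: only the self-loop on `q₃`. -/
def nγ (q : Fin 4) (_ : Bool) : Set (Fin 4) :=
  if q = 3 then {3} else ∅

/-- Adversarial prefix against a strategy. -/
def Lpref (str : List Bool → Fin 4) : ℕ → List Bool
  | 0 => []
  | n + 1 => Lpref str n ++ [decide (str (Lpref str n) = 2)]

/-- Adversarial word against a strategy. -/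
def wAdv (str : List Bool → Fin 4) (n : ℕ) : Bool := decide (str (Lpref str n) = 2)

lemma ofFn_wAdv (str : List Bool → Fin 4) :
    ∀ n, (List.ofFn fun i : Fin n => wAdv str i) = Lpref str n := by
  intro n
  induction n with
  | zero => simp [Lpref]
  | succ n ih =>
    rw [List.ofFn_succ']
    simp only [Fin.coe_castSucc, Fin.val_last, List.concat_eq_append, Lpref]
    rw [ih]
    rfl

theorem stmt4 :
    -- the automaton is strongly limit deterministic
    (∃ Q1 Q2 : Set (Fin 4), (∀ q, q ∈ Q1 ↔ q ∉ Q2) ∧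
      (∀ q ∈ Q1, ∀ b, (nδ q b ∩ Q1).Subsingleton) ∧
      (∀ q ∈ Q2, ∀ b, nδ q b ⊆ Q2 ∧ (nδ q b).Subsingleton) ∧
      (∀ q b, nγ q b ⊆ Q2)) ∧
    -- it accepts every ω-word
    (∀ w : ℕ → Bool, ∃ ρ : ℕ → Fin 4, IsRun nδ 0 w ρ ∧ AccRun nγ w ρ) ∧
    -- but no prefix-based resolution strategy yields an accepting run on all words
    ¬ ∃ str : List Bool → Fin 4, ∀ w : ℕ → Bool,
        IsRun nδ 0 w (fun n => str (List.ofFn fun i : Fin n => w i)) ∧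
        AccRun nγ w (fun n => str (List.ofFn fun i : Fin n => w i)) := by
  refine ⟨⟨{0}, {q | q ≠ 0}, ?_, ?_, ?_, ?_⟩, ?_, ?_⟩
  · intro q; simp
  · intro q hq b
    simp only [Set.mem_singleton_iff] at hq
    subst hq
    intro x hx y hy
    simp only [Set.mem_inter_iff, Set.mem_singleton_iff] at hx hy
    rw [hx.2, hy.2]
  · intro q hq b
    simp only [Set.mem_setOf_eq] at hq
    fin_cases q
    · exact absurd rfl hq
    · constructor
      · intro x hx
        simp only [nδ, show (1 : Fin 4) ≠ 0 by decide, if_false, if_pos rfl] at hx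
        cases b <;> simp_all <;> subst hx <;> decide
      · intro x hx y hy
        simp only [nδ, show (1 : Fin 4) ≠ 0 by decide, if_false, if_pos rfl] at hx hy
        cases b <;> simp_all
    · constructor
      · intro x hx
        simp only [nδ, show (2 : Fin 4) ≠ 0 by decide, show (2 : Fin 4) ≠ 1 by decide,
          if_false, if_pos rfl] at hx
        cases b <;> simp_all <;> subst hx <;> decide
      · intro x hx y hy
        simp only [nδ, show (2 : Fin 4) ≠ 0 by decide, show (2 : Fin 4) ≠ 1 by decide,
          if_false, if_pos rfl] at hx hy
        cases b <;> simp_all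
    · constructor
      · intro x hx
        simp only [nδ, show (3 : Fin 4) ≠ 0 by decide, show (3 : Fin 4) ≠ 1 by decide,
          show (3 : Fin 4) ≠ 2 by decide, if_false, Set.mem_singleton_iff] at hx
        subst hx; decide
      · intro x hx y hy
        simp only [nδ, show (3 : Fin 4) ≠ 0 by decide, show (3 : Fin 4) ≠ 1 by decide,
          show (3 : Fin 4) ≠ 2 by decide, if_false, Set.mem_singleton_iff] at hx hy
        rw [hx, hy]
  · intro q b x hx
    simp only [nγ] at hx
    split at hx
    · simp only [Set.mem_singleton_iff] at hx; subst hx; decide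
    · exact absurd hx (Set.notMem_empty x)
  · -- universality
    intro w
    refine ⟨fun n => if n = 0 then 0 else if n = 1 then (if w 1 then 1 else 2) else 3,
      ⟨rfl, ?_⟩, ?_⟩
    · intro i
      match i with
      | 0 =>
        simp only [nδ, if_pos rfl]
        by_cases h : w 1 <;> simp [h]
      | 1 =>
        by_cases h : w 1 <;> simp [h, nδ]
      | (n + 2) =>
        simp [nδ]
    · intro N
      refine ⟨N + 2, by omega, ?_⟩
      have h1 : N + 2 ≠ 0 := by omega
      have h2 : N + 2 ≠ 1 := by omega
      simp [h1, h2, nγ]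
  · -- no prefix-based strategy
    rintro ⟨str, hstr⟩
    obtain ⟨⟨h0, hstep⟩, hacc⟩ := hstr (wAdv str)
    simp only [ofFn_wAdv] at h0 hstep hacc
    -- the run can never be at 1 or 2
    have key : ∀ n, str (Lpref str (n + 1)) ≠ 1 ∧ str (Lpref str (n + 1)) ≠ 2 := by
      intro n
      constructor
      · intro h1
        have := hstep (n + 1)
        rw [h1] at this
        simp only [nδ, show (1 : Fin 4) ≠ 0 by decide, if_false, if_pos rfl, wAdv, h1] at this
        simp at this
      · intro h2
        have := hstep (n + 1)
        rw [h2] at this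
        simp only [nδ, show (2 : Fin 4) ≠ 0 by decide, show (2 : Fin 4) ≠ 1 by decide,
          if_false, if_pos rfl, wAdv, h2] at this
        simp at this
    -- so the run stays at 0
    have zero : ∀ n, str (Lpref str n) = 0 := by
      intro n
      induction n with
      | zero => simpa [Lpref] using h0
      | succ n ih =>
        have := hstep n
        rw [ih] at this
        simp only [nδ, if_pos rfl, Set.mem_insert_iff, Set.mem_singleton_iff] at this
        rcases this with h | h | h
        · exact h
        · exact absurd h (key n).1
        · exact absurd h (key n).2
    obtain ⟨i, _, hi⟩ := hacc 0
    simp only [zero, nγ, show (0 : Fin 4) ≠ 3 by decide, if_false] at hi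
    exact hi
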